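/- Let p,q ≥ 2 be coprime integers, n ≥ 1 an integer, and let τ be the tau function of Σ(p,q,pqn-1). Then τ(m_{i+1}) - τ(m_i) ≤ 0 for 0 ≤ i ≤ n(g-1) - 1, τ(m_{i+1}) - τ(m_i) = 0 for n(g-1) ≤ i ≤ ng - 2, and τ(m_{i+1}) - τ(m_i) ≥ 0 for ng - 1 ≤ i ≤ N - 2. Consequently, for every i with n(g-1) ≤ i ≤ ng - 1, τ(m_i) = min{τ(k) : k ∈ Z_{≥0}}, i.e. τ achieves its global minimum at the points m_i with n(g-1) ≤ i ≤ ng - 1. -/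

import Mathlib

/-- The numerical semigroup `S_{p,q} = {ap + bq : a,b ∈ ℤ_{≥0}}`, as a set of integers. -/
def Spq (p q : ℤ) : Set ℤ := {s | ∃ a b : ℤ, 0 ≤ a ∧ 0 ≤ b ∧ s = a * p + b * q}

/-- `Δ_j = 1 - j·e₀ - Σᵢ ⌈j·bᵢ/aᵢ⌉` for the Seifert data
`(e₀, (p,p'), (q,q'), (pqn-1, pqn-n-1))` with `e₀ = -2` of `Σ(p,q,pqn-1)`. -/
noncomputable def brieskornDelta (p q n p' q' : ℤ) (j : ℤ) : ℤ :=
  1 + 2 * j - (⌈(j * p' : ℚ) / (p : ℚ)⌉ + ⌈(j * q' : ℚ) / (q : ℚ)⌉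
    + ⌈(j * (p * q * n - n - 1) : ℚ) / (p * q * n - 1 : ℚ)⌉)

/-- The tau function `τ(k) = Σ_{j=0}^{k-1} Δ_j` of `Σ(p,q,pqn-1)`. -/
noncomputable def brieskornTau (p q n p' q' : ℤ) (k : ℤ) : ℤ :=
  ∑ j ∈ Finset.range k.toNat, brieskornDelta p q n p' q' (j : ℤ)

/-- `α_i = #{s ∈ ℤ_{≥0} : s ∉ S_{p,q}, s > i}`. -/
noncomputable def gapAlpha (p q i : ℤ) : ℕ :=
  Set.ncard {s : ℤ | 0 ≤ s ∧ s ∉ Spq p q ∧ i < s}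

namespace BrieskornAux

/-- Integer model of `1 + j - ⌈jp'/p⌉ - ⌈jq'/q⌉`. -/
def Ffun (p q p' q' j : ℤ) : ℤ := 1 + j + (-(j * p')) / p + (-(j * q')) / q

lemma ceilQ (a b : ℤ) (hb : 0 < b) : ⌈(a : ℚ) / (b : ℚ)⌉ = -((-a) / b) := by
  have h1 : ((a : ℚ)) / b = -(((-a : ℤ) : ℚ) / (((b.toNat : ℕ) : ℚ))) := by
    have : ((b.toNat : ℕ) : ℚ) = (b : ℚ) := by
      exact_mod_cast congrArg (fun z : ℤ => (z : ℚ)) (Int.toNat_of_nonneg hb.le)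
    rw [this]; push_cast; ring
  rw [h1, Int.ceil_neg, Rat.floor_intCast_div_natCast]
  rw [Int.toNat_of_nonneg hb.le]

lemma helper_nonneg {D S : ℤ} (hD : 0 < D) (h : -D < D * S) : 0 ≤ S := by nlinarith
lemma helper_nonpos {D S : ℤ} (hD : 0 < D) (h : D * S < D) : S ≤ 0 := by nlinarith
lemma helper_lt {D S t : ℤ} (hD : 0 < D) (h : D * t < D * S) : t + 1 ≤ S := by nlinarith
lemma helper_le {D S t : ℤ} (hD : 0 < D) (h : D * S < D * (t + 1)) : S ≤ t := by nlinarith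

section Flemmas
variable {p q n p' q' : ℤ}

lemma hr_pos (hp : 2 ≤ p) (hq : 2 ≤ q) (hn : 1 ≤ n) : (0:ℤ) < p * q * n - 1 := by
  have h4 : (4:ℤ) ≤ p * q := by
    nlinarith [mul_nonneg (by linarith : (0:ℤ) ≤ p - 2) (by linarith : (0:ℤ) ≤ q - 2)]
  nlinarith [mul_le_mul_of_nonneg_left hn (by linarith : (0:ℤ) ≤ p * q)]

lemma hkey_lemma (hp : 2 ≤ p) (hq : 2 ≤ q) (hpq : IsCoprime p q)
    (hp'0 : 0 < p') (hp'p : p' < p) (hq'0 : 0 < q') (hq'q : q' < q)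
    (hp' : q * p' ≡ 1 [ZMOD p]) (hq' : p * q' ≡ 1 [ZMOD q]) :
    q * p' + p * q' = p * q + 1 := by
  have d1 : p ∣ 1 - q * p' := hp'.dvd
  have d2 : q ∣ 1 - p * q' := hq'.dvd
  set K : ℤ := q * p' + p * q' - (p * q + 1) with hK
  have dp : p ∣ K := by
    obtain ⟨c, hc⟩ := d1
    exact ⟨-c + q' - q, by linarith [hc]⟩
  have dq : q ∣ K := by
    obtain ⟨c, hc⟩ := d2
    exact ⟨-c + p' - p, by linarith [hc]⟩
  have dpq : p * q ∣ K := hpq.mul_dvd dp dq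
  have hb : |K| < p * q := by
    rw [abs_lt]
    constructor
    · nlinarith
    · nlinarith
  have := Int.eq_zero_of_abs_lt_dvd dpq hb
  linarith [this]

lemma ediv_pair {a b : ℤ} (hb : 0 < b) :
    a / b + (-a) / b = if b ∣ a then 0 else -1 := by
  by_cases h : b ∣ a
  · obtain ⟨c, rfl⟩ := h
    rw [Int.mul_ediv_cancel_left _ hb.ne', ← mul_neg, Int.mul_ediv_cancel_left _ hb.ne']
    simp
  · simp only [h, if_false]
    have h1 := Int.mul_ediv_add_emod a b
    have h2 := Int.mul_ediv_add_emod (-a) b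
    have h3 := Int.emod_nonneg a hb.ne'
    have h4 := Int.emod_nonneg (-a) hb.ne'
    have h5 := Int.emod_lt_of_pos a hb
    have h6 := Int.emod_lt_of_pos (-a) hb
    have hr : a % b ≠ 0 := fun hc => h (Int.dvd_of_emod_eq_zero hc)
    have hr' : (-a) % b ≠ 0 := by
      intro hc
      exact h (dvd_neg.mp (Int.dvd_of_emod_eq_zero hc))
    have e1 : 1 ≤ a % b := lt_of_le_of_ne h3 (Ne.symm hr)
    have e2 : 1 ≤ (-a) % b := lt_of_le_of_ne h4 (Ne.symm hr')
    nlinarith [h1, h2]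

lemma Fzero (hp : 0 < p) (hq : 0 < q) : Ffun p q p' q' 0 = 1 := by
  simp [Ffun]

lemma Fper (hp : 0 < p) (hq : 0 < q) (hkey : q * p' + p * q' = p * q + 1) (j : ℤ) :
    Ffun p q p' q' (j + p * q) = Ffun p q p' q' j - 1 := by
  have e1 : -((j + p * q) * p') = -(j * p') + p * (-(q * p')) := by ring
  have e2 : -((j + p * q) * q') = -(j * q') + q * (-(p * q')) := by ring
  unfold Ffun
  rw [e1, e2, Int.add_mul_ediv_left _ _ hp.ne', Int.add_mul_ediv_left _ _ hq.ne']
  linarith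

lemma Fshift (hp : 0 < p) (hq : 0 < q) (hkey : q * p' + p * q' = p * q + 1) :
    ∀ i : ℤ, 0 ≤ i → ∀ j : ℤ, Ffun p q p' q' (j + p * q * i) = Ffun p q p' q' j - i := by
  refine fun i hi => Int.le_induction
    (motive := fun i _ => ∀ j : ℤ, Ffun p q p' q' (j + p * q * i) = Ffun p q p' q' j - i) ?_ ?_ i hi
  · intro j; rw [mul_zero, add_zero]; ring
  · intro k hk ih j
    have e : j + p * q * (k + 1) = (j + p * q * k) + p * q := by ring
    rw [e, Fper hp hq hkey, ih]
    ring

lemma Fneg (hp : 0 < p) (hq : 0 < q) (hp'p : p' < p) (hq'q : q' < q)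
    (hkey : q * p' + p * q' = p * q + 1) {x : ℤ} (hx : x ≤ 0) :
    0 ≤ Ffun p q p' q' x := by
  have hpq : 0 < p * q := mul_pos hp hq
  have h1 := Int.mul_ediv_add_emod (-(x * p')) p
  have h2 := Int.mul_ediv_add_emod (-(x * q')) q
  have h3 := Int.emod_nonneg (-(x * p')) hp.ne'
  have h4 := Int.emod_nonneg (-(x * q')) hq.ne'
  have h5 := Int.emod_lt_of_pos (-(x * p')) hp
  have h6 := Int.emod_lt_of_pos (-(x * q')) hq
  refine helper_nonneg hpq ?_
  unfold Ffun
  nlinarith [mul_le_mul_of_nonneg_left h5.le hq.le, mul_le_mul_of_nonneg_left h6.le hp.le,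
    mul_nonneg hq.le h3, mul_nonneg hp.le h4]

lemma Fpos (hp : 0 < p) (hq : 0 < q) (hkey : q * p' + p * q' = p * q + 1) {x : ℤ}
    (hx : 1 ≤ x) : Ffun p q p' q' x ≤ 0 := by
  have hpq : 0 < p * q := mul_pos hp hq
  have h1 := Int.mul_ediv_add_emod (-(x * p')) p
  have h2 := Int.mul_ediv_add_emod (-(x * q')) q
  have h3 := Int.emod_nonneg (-(x * p')) hp.ne'
  have h4 := Int.emod_nonneg (-(x * q')) hq.ne'
  refine helper_nonpos hpq ?_
  unfold Ffun
  nlinarith [mul_nonneg hq.le h3, mul_nonneg hp.le h4]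

end Flemmas

section Sums

lemma Ico_single (a : ℤ) : Finset.Ico a (a + 1) = {a} := by
  ext x; simp [Finset.mem_Ico]; omega

variable {D : ℤ → ℤ}

lemma sum_split {a b c : ℤ} (h1 : a ≤ b) (h2 : b ≤ c) :
    ∑ j ∈ Finset.Ico a c, D j = (∑ j ∈ Finset.Ico a b, D j) + ∑ j ∈ Finset.Ico b c, D j := by
  rw [← Finset.sum_union (Finset.Ico_disjoint_Ico_consecutive a b c),
    Finset.Ico_union_Ico_eq_Ico h1 h2]

lemma sum_front {a b : ℤ} (h : a < b) :
    ∑ j ∈ Finset.Ico a b, D j = D a + ∑ j ∈ Finset.Ico (a + 1) b, D j := by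
  rw [sum_split (by omega : a ≤ a + 1) (by omega : a + 1 ≤ b), Ico_single,
    Finset.sum_singleton]

lemma sum_back {a b : ℤ} (h : a < b) :
    ∑ j ∈ Finset.Ico a b, D j = (∑ j ∈ Finset.Ico a (b - 1), D j) + D (b - 1) := by
  rw [sum_split (by omega : a ≤ b - 1) (by omega : b - 1 ≤ b)]
  congr 1
  have e : Finset.Ico (b - 1) b = {b - 1} := by ext x; simp [Finset.mem_Ico]; omega
  rw [e, Finset.sum_singleton]

lemma sum_shift (a b c : ℤ) :
    ∑ j ∈ Finset.Ico (c + a) (c + b), D j = ∑ x ∈ Finset.Ico a b, D (c + x) := by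
  rw [← Finset.map_add_left_Ico, Finset.sum_map]
  rfl

lemma range_toNat (D : ℤ → ℤ) (k : ℤ) :
    ∑ j ∈ Finset.range k.toNat, D (j : ℤ) = ∑ j ∈ Finset.Ico (0 : ℤ) k, D j := by
  refine Finset.sum_nbij' (fun a => (a : ℤ)) (fun b => b.toNat) ?_ ?_ ?_ ?_ ?_
  · intro a ha; simp only [Finset.mem_range] at ha; simp [Finset.mem_Ico]; omega
  · intro b hb; simp only [Finset.mem_Ico] at hb; simp [Finset.mem_range]; omega
  · intro a ha; simp
  · intro b hb; simp only [Finset.mem_Ico] at hb; simp; omega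
  · intro a ha; rfl

end Sums

section CountC
variable {p q n p' q' g : ℤ}

lemma count_dvd (hp : 2 ≤ p) (hq : 2 ≤ q) :
    ∑ x ∈ Finset.Ico (1 : ℤ) (p * q), (if p ∣ x then (1 : ℤ) else 0) = q - 1 := by
  have hp0 : (0:ℤ) < p := by linarith
  have e : Finset.filter (fun x => p ∣ x) (Finset.Ico (1:ℤ) (p*q))
      = Finset.map ⟨fun t => p * t, fun a b h => mul_left_cancel₀ hp0.ne' h⟩
        (Finset.Ico (1:ℤ) q) := by
    ext x
    simp only [Finset.mem_filter, Finset.mem_Ico, Finset.mem_map, Function.Embedding.coeFn_mk]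
    constructor
    · rintro ⟨⟨h1, h2⟩, t, rfl⟩
      refine ⟨t, ⟨?_, ?_⟩, rfl⟩
      · by_contra hc; push_neg at hc; nlinarith
      · by_contra hc; push_neg at hc; nlinarith
    · rintro ⟨t, ⟨h1, h2⟩, rfl⟩
      refine ⟨⟨by show (1:ℤ) ≤ p * t; nlinarith, by show p * t < p * q; nlinarith⟩, ⟨t, rfl⟩⟩
  rw [Finset.sum_boole, e, Finset.card_map, Int.card_Ico]
  omega

lemma count_dvd' (hp : 2 ≤ p) (hq : 2 ≤ q) :
    ∑ x ∈ Finset.Ico (1 : ℤ) (p * q), (if q ∣ x then (1 : ℤ) else 0) = p - 1 := by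
  have := count_dvd (p := q) (q := p) hq hp
  rw [mul_comm q p] at this
  exact this

lemma refl_sum (f : ℤ → ℤ) :
    ∑ x ∈ Finset.Ico (1:ℤ) (p * q), f (p * q - x)
      = ∑ x ∈ Finset.Ico (1:ℤ) (p * q), f x := by
  refine Finset.sum_nbij' (fun x => p * q - x) (fun x => p * q - x) ?_ ?_ ?_ ?_ ?_
  · intro a ha; simp only [Finset.mem_Ico] at *; omega
  · intro a ha; simp only [Finset.mem_Ico] at *; omega
  · intro a ha; simp
  · intro a ha; simp
  · intro a ha; rfl

lemma reflF (hp : 2 ≤ p) (hq : 2 ≤ q) (hkey : q * p' + p * q' = p * q + 1) (x : ℤ) :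
    Ffun p q p' q' x + Ffun p q p' q' (p * q - x)
      = (if p ∣ x then (1:ℤ) else 0) + (if q ∣ x then (1:ℤ) else 0) - 1 := by
  have hp0 : (0:ℤ) < p := by linarith
  have hq0 : (0:ℤ) < q := by linarith
  have copp : IsCoprime p p' := ⟨q' - q, q, by linear_combination hkey⟩
  have copq : IsCoprime q q' := ⟨p' - p, p, by linear_combination hkey⟩
  have e : p * q - x = (-x) + p * q := by ring
  rw [e, Fper hp0 hq0 hkey]
  have d1 : (-(x * p')) / p + (x * p') / p = if p ∣ x * p' then 0 else -1 := by
    rw [add_comm]; exact ediv_pair hp0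
  have d2 : (-(x * q')) / q + (x * q') / q = if q ∣ x * q' then 0 else -1 := by
    rw [add_comm]; exact ediv_pair hq0
  have i1 : (p ∣ x * p') ↔ (p ∣ x) :=
    ⟨fun h => copp.dvd_of_dvd_mul_right h, fun h => h.mul_right _⟩
  have i2 : (q ∣ x * q') ↔ (q ∣ x) :=
    ⟨fun h => copq.dvd_of_dvd_mul_right h, fun h => h.mul_right _⟩
  simp only [i1] at d1; simp only [i2] at d2
  have e1 : -((-x) * p') = x * p' := by ring
  have e2 : -((-x) * q') = x * q' := by ring
  unfold Ffun
  rw [e1, e2]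
  split_ifs at * <;> linarith

lemma Csum (hp : 2 ≤ p) (hq : 2 ≤ q) (hkey : q * p' + p * q' = p * q + 1)
    (hg : 2 * g = (p - 1) * (q - 1)) :
    ∑ x ∈ Finset.Ico (0:ℤ) (p * q), Ffun p q p' q' x = 1 - g := by
  have hp0 : (0:ℤ) < p := by linarith
  have hq0 : (0:ℤ) < q := by linarith
  have hpq1 : (1:ℤ) < p * q := by nlinarith
  rw [sum_front (by omega : (0:ℤ) < p * q), Fzero hp0 hq0]
  rw [show (0:ℤ) + 1 = 1 by ring]
  set S1 := ∑ x ∈ Finset.Ico (1:ℤ) (p * q), Ffun p q p' q' x with hS1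
  have db : S1 + S1 = ∑ x ∈ Finset.Ico (1:ℤ) (p * q),
      (Ffun p q p' q' x + Ffun p q p' q' (p * q - x)) := by
    rw [Finset.sum_add_distrib, refl_sum]
  rw [Finset.sum_congr rfl (fun x _ => reflF hp hq hkey x)] at db
  rw [Finset.sum_sub_distrib, Finset.sum_add_distrib, count_dvd hp hq, count_dvd' hp hq] at db
  rw [Finset.sum_const, Int.card_Ico] at db
  have hc : ((p * q - 1).toNat : ℤ) = p * q - 1 := Int.toNat_of_nonneg (by omega)
  simp only [nsmul_eq_mul, mul_one] at db
  rw [hc] at db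
  have hgx : 2 * g = p * q - p - q + 1 := by linear_combination hg
  linarith

end CountC

section Theta
variable {p q n p' q' g : ℤ}

/-- window sum `∑_{x=-s}^{pq-s-1} F(x) = 1 - g + s`. -/
lemma S1sum (hp : 2 ≤ p) (hq : 2 ≤ q) (hkey : q * p' + p * q' = p * q + 1)
    (hg : 2 * g = (p - 1) * (q - 1)) :
    ∀ s : ℤ, 0 ≤ s →
      ∑ x ∈ Finset.Ico (-s) (p * q - s), Ffun p q p' q' x = 1 - g + s := by
  have hp0 : (0:ℤ) < p := by linarith
  have hq0 : (0:ℤ) < q := by linarith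
  have hpq1 : (1:ℤ) < p * q := by nlinarith
  refine fun s hs => Int.le_induction
    (motive := fun s _ => ∑ x ∈ Finset.Ico (-s) (p * q - s), Ffun p q p' q' x = 1 - g + s)
    ?_ ?_ s hs
  · simpa using Csum hp hq hkey hg
  · intro s hs ih
    have h1 : -(s+1) < p * q - (s+1) := by omega
    rw [sum_front h1]
    have e1 : -(s+1) + 1 = -s := by ring
    have h2 : -s < p * q - s := by omega
    have e2 : p * q - (s + 1) = (p * q - s) - 1 := by ring
    rw [e1, e2]
    have hsb := sum_back (D := Ffun p q p' q') h2
    rw [ih] at hsb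
    have e3 : p * q - s - 1 = (-(s+1)) + p * q := by ring
    have hper : Ffun p q p' q' (p * q - s - 1) = Ffun p q p' q' (-(s+1)) - 1 := by
      rw [e3, Fper hp0 hq0 hkey]
    linarith

/-- Lower bound for the short-block correction in the decreasing range. -/
lemma thL1 (hp : 2 ≤ p) (hq : 2 ≤ q) (hp'0 : 0 < p') (hp'p : p' < p)
    (hq'0 : 0 < q') (hq'q : q' < q) (hkey : q * p' + p * q' = p * q + 1)
    {s : ℤ} (hs : 0 ≤ s) (hsg : s ≤ g - 2) :
    1 - g + s - Ffun p q p' q' (p * q - 1 - s) ≤ 0 := by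
  have hp0 : (0:ℤ) < p := by linarith
  have hq0 : (0:ℤ) < q := by linarith
  have hpq : (0:ℤ) < p * q := by positivity
  have e3 : p * q - 1 - s = (-(s+1)) + p * q := by ring
  rw [e3, Fper hp0 hq0 hkey]
  have e1 : -(-(s+1) * p') = (s+1) * p' := by ring
  have e2 : -(-(s+1) * q') = (s+1) * q' := by ring
  unfold Ffun
  rw [e1, e2]
  -- suffices: A + B ≥ s where A = ((s+1)p')/p, B = ((s+1)q')/q
  have hA := Int.mul_ediv_add_emod ((s+1) * p') p
  have hB := Int.mul_ediv_add_emod ((s+1) * q') q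
  have hA1 := Int.emod_nonneg ((s+1) * p') hp0.ne'
  have hB1 := Int.emod_nonneg ((s+1) * q') hq0.ne'
  have hA2 := Int.emod_lt_of_pos ((s+1) * p') hp0
  have hB2 := Int.emod_lt_of_pos ((s+1) * q') hq0
  have key : s - 1 + 1 ≤ ((s+1) * p') / p + ((s+1) * q') / q := by
    refine helper_lt hpq ?_
    nlinarith [mul_le_mul_of_nonneg_left hA2.le hq0.le,
      mul_le_mul_of_nonneg_left hB2.le hp0.le]
  linarith

/-- `Θ(y) ≥ g` for `y ≥ g`, phrased as a floor-sum bound. -/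
lemma thetaGe (hp : 2 ≤ p) (hq : 2 ≤ q) (hp'0 : 0 < p') (hp'p : p' < p)
    (hq'0 : 0 < q') (hq'q : q' < q) (hkey : q * p' + p * q' = p * q + 1)
    (hg1 : 1 ≤ g) (hgpq : g < p * q) :
    ∀ y : ℤ, g ≤ y → (y * p') / p + (y * q') / q ≤ 2 * y - g := by
  have hp0 : (0:ℤ) < p := by linarith
  have hq0 : (0:ℤ) < q := by linarith
  have hpq : (0:ℤ) < p * q := by positivity
  refine fun y hy => Int.le_induction
    (motive := fun y _ => (y * p') / p + (y * q') / q ≤ 2 * y - g) ?_ ?_ y hy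
  · -- y = g
    have hA := Int.mul_ediv_add_emod (g * p') p
    have hB := Int.mul_ediv_add_emod (g * q') q
    have hA1 := Int.emod_nonneg (g * p') hp0.ne'
    have hB1 := Int.emod_nonneg (g * q') hq0.ne'
    have key : (g * p') / p + (g * q') / q ≤ g := by
      refine helper_le hpq ?_
      nlinarith [mul_nonneg hq0.le hA1, mul_nonneg hp0.le hB1]
    linarith
  · intro y hy ih
    have s1 : ((y + 1) * p') / p ≤ (y * p') / p + 1 := by
      have e : (y * p') + p * 1 = y * p' + p := by ring
      have h1 : (y + 1) * p' ≤ y * p' + p := by nlinarith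
      calc ((y + 1) * p') / p ≤ (y * p' + p * 1) / p := Int.ediv_le_ediv hp0 (by linarith)
        _ = (y * p') / p + 1 := Int.add_mul_ediv_left _ _ hp0.ne'
    have s2 : ((y + 1) * q') / q ≤ (y * q') / q + 1 := by
      have h1 : (y + 1) * q' ≤ y * q' + q := by nlinarith
      calc ((y + 1) * q') / q ≤ (y * q' + q * 1) / q := Int.ediv_le_ediv hq0 (by linarith)
        _ = (y * q') / q + 1 := Int.add_mul_ediv_left _ _ hq0.ne'
    linarith

/-- Upper bound for the short-block correction in the increasing range. -/
lemma thL2 (hp : 2 ≤ p) (hq : 2 ≤ q) (hp'0 : 0 < p') (hp'p : p' < p)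
    (hq'0 : 0 < q') (hq'q : q' < q) (hkey : q * p' + p * q' = p * q + 1)
    (hg : 2 * g = (p - 1) * (q - 1)) {s : ℤ} (hs : g - 1 ≤ s) :
    0 ≤ 1 - g + s - Ffun p q p' q' (p * q - 1 - s) := by
  have hp0 : (0:ℤ) < p := by linarith
  have hq0 : (0:ℤ) < q := by linarith
  have hg1 : (1:ℤ) ≤ g := by nlinarith
  have hgpq : g < p * q := by nlinarith
  have e3 : p * q - 1 - s = (-(s+1)) + p * q := by ring
  rw [e3, Fper hp0 hq0 hkey]
  have e1 : -(-(s+1) * p') = (s+1) * p' := by ring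
  have e2 : -(-(s+1) * q') = (s+1) * q' := by ring
  unfold Ffun
  rw [e1, e2]
  have key := thetaGe hp hq hp'0 hp'p hq'0 hq'q hkey hg1 hgpq (s + 1) (by linarith)
  linarith

end Theta

section Tau
variable {p q n p' q' g : ℤ}

lemma deltaF (hp : 2 ≤ p) (hq : 2 ≤ q) (hn : 1 ≤ n) (j : ℤ) :
    brieskornDelta p q n p' q' j = Ffun p q p' q' j + (j * n) / (p * q * n - 1) := by
  have hp0 : (0:ℤ) < p := by linarith
  have hq0 : (0:ℤ) < q := by linarith
  have hr : (0:ℤ) < p * q * n - 1 := hr_pos hp hq hn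
  have c1 : ⌈(j * p' : ℚ) / (p : ℚ)⌉ = -((-(j * p')) / p) := by
    rw [← ceilQ _ _ hp0]; push_cast; ring_nf
  have c2 : ⌈(j * q' : ℚ) / (q : ℚ)⌉ = -((-(j * q')) / q) := by
    rw [← ceilQ _ _ hq0]; push_cast; ring_nf
  have c3 : ⌈(j * (p * q * n - n - 1) : ℚ) / (p * q * n - 1 : ℚ)⌉
      = j - (j * n) / (p * q * n - 1) := by
    have e : (j * (p * q * n - n - 1) : ℚ) / (p * q * n - 1 : ℚ)
        = ((j * (p * q * n - n - 1) : ℤ) : ℚ) / (((p * q * n - 1 : ℤ)) : ℚ) := by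
      push_cast; ring_nf
    rw [e, ceilQ _ _ hr]
    have e2 : -(j * (p * q * n - n - 1)) = j * n + (p * q * n - 1) * (-j) := by ring
    rw [e2, Int.add_mul_ediv_left _ _ hr.ne']
    ring
  rw [brieskornDelta, c1, c2, c3, Ffun]
  ring

lemma block_ediv (hp : 2 ≤ p) (hq : 2 ≤ q) (hn : 1 ≤ n) {i j : ℤ} (hi : 0 ≤ i)
    (h1 : p * q * i - i / n ≤ j) (h2 : j < p * q * (i + 1) - (i + 1) / n) :
    (j * n) / (p * q * n - 1) = i := by
  have hn0 : (0:ℤ) < n := by linarith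
  have hr : (0:ℤ) < p * q * n - 1 := hr_pos hp hq hn
  have hd1 := Int.mul_ediv_add_emod i n
  have hd2 := Int.mul_ediv_add_emod (i+1) n
  have hm1 := Int.emod_nonneg i hn0.ne'
  have hm2 := Int.emod_nonneg (i+1) hn0.ne'
  have hl1 := Int.emod_lt_of_pos i hn0
  have hl2 := Int.emod_lt_of_pos (i+1) hn0
  have low : i * (p * q * n - 1) ≤ j * n := by
    have := mul_le_mul_of_nonneg_right h1 hn0.le
    nlinarith
  have high : j * n < (i + 1) * (p * q * n - 1) := by
    have hj : j ≤ p * q * (i + 1) - (i + 1) / n - 1 := by linarith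
    have := mul_le_mul_of_nonneg_right hj hn0.le
    nlinarith
  have g1 : i ≤ (j * n) / (p * q * n - 1) := Int.le_ediv_of_mul_le hr low
  have g2 : (j * n) / (p * q * n - 1) < i + 1 := Int.ediv_lt_of_lt_mul hr high
  omega

lemma block_mem (hp : 2 ≤ p) (hq : 2 ≤ q) (hn : 1 ≤ n) {k : ℤ} (hk : 0 ≤ k) :
    ∃ i : ℤ, 0 ≤ i ∧ p * q * i - i / n ≤ k ∧ k < p * q * (i + 1) - (i + 1) / n := by
  have hn0 : (0:ℤ) < n := by linarith
  have hr : (0:ℤ) < p * q * n - 1 := hr_pos hp hq hn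
  set r : ℤ := p * q * n - 1 with hrdef
  set i : ℤ := (k * n) / r with hi
  have hi0 : 0 ≤ i := Int.ediv_nonneg (by positivity) hr.le
  have hd := Int.mul_ediv_add_emod (k * n) r
  have hm := Int.emod_nonneg (k * n) hr.ne'
  have hl := Int.emod_lt_of_pos (k * n) hr
  have hd1 := Int.mul_ediv_add_emod i n
  have hm1 := Int.emod_nonneg i hn0.ne'
  have hl1 := Int.emod_lt_of_pos i hn0
  have hd2 := Int.mul_ediv_add_emod (i+1) n
  have hm2 := Int.emod_nonneg (i+1) hn0.ne'
  have hl2 := Int.emod_lt_of_pos (i+1) hn0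
  refine ⟨i, hi0, ?_, ?_⟩
  · by_contra hcon
    push_neg at hcon
    have hk1 : k ≤ p * q * i - i / n - 1 := by linarith
    have := mul_le_mul_of_nonneg_right hk1 hn0.le
    nlinarith
  · by_contra hcon
    push_neg at hcon
    have := mul_le_mul_of_nonneg_right hcon hn0.le
    nlinarith

lemma tauIco (p q n p' q' : ℤ) (k : ℤ) :
    brieskornTau p q n p' q' k = ∑ j ∈ Finset.Ico (0:ℤ) k, brieskornDelta p q n p' q' j := by
  rw [brieskornTau]; exact range_toNat _ k

lemma tau_sub {a b : ℤ} (h0 : 0 ≤ a) (hab : a ≤ b) :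
    brieskornTau p q n p' q' b = brieskornTau p q n p' q' a
      + ∑ j ∈ Finset.Ico a b, brieskornDelta p q n p' q' j := by
  rw [tauIco, tauIco, sum_split h0 hab]

lemma tau_mono_up {a b : ℤ} (h0 : 0 ≤ a) (hab : a ≤ b)
    (hD : ∀ j, a ≤ j → j < b → 0 ≤ brieskornDelta p q n p' q' j) :
    brieskornTau p q n p' q' a ≤ brieskornTau p q n p' q' b := by
  rw [tau_sub h0 hab]
  have : 0 ≤ ∑ j ∈ Finset.Ico a b, brieskornDelta p q n p' q' j :=
    Finset.sum_nonneg fun j hj => by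
      rw [Finset.mem_Ico] at hj; exact hD j hj.1 hj.2
  linarith

lemma tau_mono_dn {a b : ℤ} (h0 : 0 ≤ a) (hab : a ≤ b)
    (hD : ∀ j, a ≤ j → j < b → brieskornDelta p q n p' q' j ≤ 0) :
    brieskornTau p q n p' q' b ≤ brieskornTau p q n p' q' a := by
  rw [tau_sub h0 hab]
  have : ∑ j ∈ Finset.Ico a b, brieskornDelta p q n p' q' j ≤ 0 :=
    Finset.sum_nonpos fun j hj => by
      rw [Finset.mem_Ico] at hj; exact hD j hj.1 hj.2
  linarith

lemma m_nonneg (hp : 2 ≤ p) (hq : 2 ≤ q) (hn : 1 ≤ n) {i : ℤ} (hi : 0 ≤ i) :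
    0 ≤ p * q * i - i / n := by
  have hn0 : (0:ℤ) < n := by linarith
  have h1 : i / n ≤ i := Int.ediv_le_self _ hi
  nlinarith [mul_le_mul_of_nonneg_right (show (1:ℤ) ≤ p * q by nlinarith) hi]

lemma sdiv_succ (hn : 1 ≤ n) (i : ℤ) : i / n ≤ (i + 1) / n ∧ (i + 1) / n ≤ i / n + 1 := by
  have hn0 : (0:ℤ) < n := by linarith
  constructor
  · exact Int.ediv_le_ediv hn0 (by linarith)
  · calc (i + 1) / n ≤ (i + n * 1) / n := Int.ediv_le_ediv hn0 (by linarith)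
      _ = i / n + 1 := Int.add_mul_ediv_left _ _ hn0.ne'

lemma m_lt (hp : 2 ≤ p) (hq : 2 ≤ q) (hn : 1 ≤ n) (i : ℤ) :
    p * q * i - i / n < p * q * (i + 1) - (i + 1) / n := by
  have h := (sdiv_succ hn i).2
  have h4 : (4:ℤ) ≤ p * q := by
    nlinarith [mul_nonneg (by linarith : (0:ℤ) ≤ p - 2) (by linarith : (0:ℤ) ≤ q - 2)]
  nlinarith

lemma dval (hp : 2 ≤ p) (hq : 2 ≤ q) (hn : 1 ≤ n) (hkey : q * p' + p * q' = p * q + 1)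
    {i j : ℤ} (hi : 0 ≤ i)
    (h1 : p * q * i - i / n ≤ j) (h2 : j < p * q * (i + 1) - (i + 1) / n) :
    brieskornDelta p q n p' q' j = Ffun p q p' q' (j - p * q * i) := by
  have hp0 : (0:ℤ) < p := by linarith
  have hq0 : (0:ℤ) < q := by linarith
  rw [deltaF hp hq hn, block_ediv hp hq hn hi h1 h2]
  have h := Fshift hp0 hq0 hkey i hi (j - p * q * i)
  have e : (j - p * q * i) + p * q * i = j := by ring
  rw [e] at h
  linarith

lemma blockSum (hp : 2 ≤ p) (hq : 2 ≤ q) (hn : 1 ≤ n)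
    (hkey : q * p' + p * q' = p * q + 1) {i : ℤ} (hi : 0 ≤ i) :
    ∑ j ∈ Finset.Ico (p * q * i - i / n) (p * q * (i + 1) - (i + 1) / n),
        brieskornDelta p q n p' q' j
      = ∑ x ∈ Finset.Ico (-(i / n)) (p * q - (i + 1) / n), Ffun p q p' q' x := by
  have e1 : p * q * i - i / n = p * q * i + (-(i / n)) := by ring
  have e2 : p * q * (i + 1) - (i + 1) / n = p * q * i + (p * q - (i + 1) / n) := by ring
  rw [e1, e2, sum_shift]
  refine Finset.sum_congr rfl fun x hx => ?_
  rw [Finset.mem_Ico] at hx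
  have hd := dval hp hq hn hkey hi (j := p * q * i + x)
    (by linarith [hx.1]) (by linarith [hx.2])
  rw [hd]
  congr 1
  ring

lemma div_lt_bound (hn : 1 ≤ n) {i c : ℤ} (h : i ≤ n * c - 1) : i / n ≤ c - 1 := by
  have hn0 : (0:ℤ) < n := by linarith
  by_contra hc
  push_neg at hc
  have h2 : c ≤ i / n := by omega
  have h3 := Int.mul_ediv_add_emod i n
  have h4 := Int.emod_nonneg i hn0.ne'
  nlinarith [mul_le_mul_of_nonneg_left h2 hn0.le]

lemma div_ge_bound (hn : 1 ≤ n) {i c : ℤ} (h : n * c ≤ i) : c ≤ i / n := by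
  have hn0 : (0:ℤ) < n := by linarith
  calc c = (n * c) / n := (Int.mul_ediv_cancel_left _ hn0.ne').symm
    _ ≤ i / n := Int.ediv_le_ediv hn0 h

end Tau
end BrieskornAux

open BrieskornAux

/-- For the tau function `τ` of `Σ(p,q,pqn-1)` (coprime `p,q ≥ 2`, `n ≥ 1`), with
`g = (p-1)(q-1)/2`, `N = n(2g-1)` and `m_i = pqi - ⌊i/n⌋`:
`τ(m_{i+1}) - τ(m_i) ≤ 0` for `0 ≤ i ≤ n(g-1) - 1`, `= 0` for `n(g-1) ≤ i ≤ ng - 2`,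
and `≥ 0` for `ng - 1 ≤ i ≤ N - 2`.  Consequently `τ` achieves its global minimum over
`ℤ_{≥0}` at each `m_i` with `n(g-1) ≤ i ≤ ng - 1`. -/
theorem brieskornTau_min (p q n p' q' : ℤ) (hp : 2 ≤ p) (hq : 2 ≤ q)
    (hpq : IsCoprime p q) (hn : 1 ≤ n)
    (hp'0 : 0 < p') (hp'p : p' < p) (hq'0 : 0 < q') (hq'q : q' < q)
    (hp' : q * p' ≡ 1 [ZMOD p]) (hq' : p * q' ≡ 1 [ZMOD q])
    (g : ℤ) (hg : 2 * g = (p - 1) * (q - 1)) :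
    (∀ i : ℤ, 0 ≤ i → i ≤ n * (g - 1) - 1 →
      brieskornTau p q n p' q' (p * q * (i + 1) - (i + 1) / n)
        ≤ brieskornTau p q n p' q' (p * q * i - i / n)) ∧
    (∀ i : ℤ, n * (g - 1) ≤ i → i ≤ n * g - 2 →
      brieskornTau p q n p' q' (p * q * (i + 1) - (i + 1) / n)
        = brieskornTau p q n p' q' (p * q * i - i / n)) ∧
    (∀ i : ℤ, n * g - 1 ≤ i → i ≤ n * (2 * g - 1) - 2 →
      brieskornTau p q n p' q' (p * q * i - i / n)
        ≤ brieskornTau p q n p' q' (p * q * (i + 1) - (i + 1) / n)) ∧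
    (∀ i : ℤ, n * (g - 1) ≤ i → i ≤ n * g - 1 →
      ∀ k : ℤ, 0 ≤ k →
        brieskornTau p q n p' q' (p * q * i - i / n) ≤ brieskornTau p q n p' q' k) := by
  have hp0 : (0:ℤ) < p := by linarith
  have hq0 : (0:ℤ) < q := by linarith
  have hn0 : (0:ℤ) < n := by linarith
  have hkey := hkey_lemma hp hq hpq hp'0 hp'p hq'0 hq'q hp' hq'
  have hg1 : (1:ℤ) ≤ g := by nlinarith
  have h4 : (4:ℤ) ≤ p * q := by
    nlinarith [mul_nonneg (by linarith : (0:ℤ) ≤ p - 2) (by linarith : (0:ℤ) ≤ q - 2)]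
  -- long block value
  have cLong : ∀ i : ℤ, 0 ≤ i → (i + 1) / n = i / n →
      brieskornTau p q n p' q' (p * q * (i + 1) - (i + 1) / n)
        = brieskornTau p q n p' q' (p * q * i - i / n) + (1 - g + i / n) := by
    intro i hi hL
    have hms := tau_sub (p := p) (q := q) (n := n) (p' := p') (q' := q')
      (m_nonneg hp hq hn hi) (m_lt hp hq hn i).le
    rw [hms, blockSum hp hq hn hkey hi, hL,
      S1sum hp hq hkey hg (i / n) (Int.ediv_nonneg hi hn0.le)]
  -- short block value
  have cShort : ∀ i : ℤ, 0 ≤ i → (i + 1) / n = i / n + 1 →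
      brieskornTau p q n p' q' (p * q * (i + 1) - (i + 1) / n)
        = brieskornTau p q n p' q' (p * q * i - i / n)
          + (1 - g + i / n - Ffun p q p' q' (p * q - 1 - i / n)) := by
    intro i hi hS
    have hms := tau_sub (p := p) (q := q) (n := n) (p' := p') (q' := q')
      (m_nonneg hp hq hn hi) (m_lt hp hq hn i).le
    rw [hms, blockSum hp hq hn hkey hi, hS]
    have hs0 : 0 ≤ i / n := Int.ediv_nonneg hi hn0.le
    have hS1 := S1sum hp hq hkey hg (i / n) hs0
    have hlt : -(i / n) < p * q - i / n := by linarith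
    have hsb := sum_back (D := Ffun p q p' q') hlt
    rw [hS1] at hsb
    have e1 : p * q - (i / n + 1) = p * q - i / n - 1 := by ring
    rw [e1]
    have e2 : Ffun p q p' q' (p * q - 1 - i / n) = Ffun p q p' q' (p * q - i / n - 1) := by
      congr 1; ring
    rw [e2]
    linarith
  -- decreasing range
  have B1 : ∀ i : ℤ, 0 ≤ i → i ≤ n * (g - 1) - 1 →
      brieskornTau p q n p' q' (p * q * (i + 1) - (i + 1) / n)
        ≤ brieskornTau p q n p' q' (p * q * i - i / n) := by
    intro i hi hub
    have hs0 : 0 ≤ i / n := Int.ediv_nonneg hi hn0.le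
    have hs2 : i / n ≤ (g - 1) - 1 := div_lt_bound hn (by linarith)
    have hd := sdiv_succ hn i
    rcases (by omega : (i + 1) / n = i / n ∨ (i + 1) / n = i / n + 1) with hL | hS
    · rw [cLong i hi hL]; linarith
    · rw [cShort i hi hS]
      have := thL1 (g := g) hp hq hp'0 hp'p hq'0 hq'q hkey hs0 (by linarith)
      linarith
  -- flat range
  have B2 : ∀ i : ℤ, n * (g - 1) ≤ i → i ≤ n * g - 2 →
      brieskornTau p q n p' q' (p * q * (i + 1) - (i + 1) / n)
        = brieskornTau p q n p' q' (p * q * i - i / n) := by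
    intro i h1 h2
    have hA0 : (0:ℤ) ≤ n * (g - 1) := mul_nonneg hn0.le (by linarith)
    have hi : 0 ≤ i := le_trans hA0 h1
    have hsge : g - 1 ≤ i / n := div_ge_bound hn h1
    have hsle : i / n ≤ g - 1 := div_lt_bound hn (by linarith)
    have hs'le : (i + 1) / n ≤ g - 1 := div_lt_bound hn (by linarith)
    have hd := sdiv_succ hn i
    have hL : (i + 1) / n = i / n := by omega
    rw [cLong i hi hL]
    have hsv : i / n = g - 1 := le_antisymm hsle hsge
    rw [hsv]; ring
  -- increasing range
  have B3 : ∀ i : ℤ, n * g - 1 ≤ i →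
      brieskornTau p q n p' q' (p * q * i - i / n)
        ≤ brieskornTau p q n p' q' (p * q * (i + 1) - (i + 1) / n) := by
    intro i h1
    have hng : (1:ℤ) ≤ n * g := by nlinarith
    have hi : 0 ≤ i := by linarith
    have e : n * (g - 1) = n * g - n * 1 := by ring
    have hsge : g - 1 ≤ i / n := div_ge_bound hn (by linarith [e])
    have hd := sdiv_succ hn i
    rcases (by omega : (i + 1) / n = i / n ∨ (i + 1) / n = i / n + 1) with hL | hS
    · rw [cLong i hi hL]; linarith
    · rw [cShort i hi hS]
      have := thL2 hp hq hp'0 hp'p hq'0 hq'q hkey hg hsge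
      linarith
  have cge : ∀ i : ℤ, n * (g - 1) ≤ i →
      brieskornTau p q n p' q' (p * q * i - i / n)
        ≤ brieskornTau p q n p' q' (p * q * (i + 1) - (i + 1) / n) := by
    intro i h1
    rcases le_or_gt i (n * g - 2) with h2 | h2
    · exact le_of_eq (B2 i h1 h2).symm
    · exact B3 i (by omega)
  have up : ∀ i : ℤ, n * (g - 1) ≤ i →
      brieskornTau p q n p' q' (p * q * (n * (g - 1)) - (n * (g - 1)) / n)
        ≤ brieskornTau p q n p' q' (p * q * i - i / n) := by
    refine fun i hi => Int.le_induction
      (motive := fun i _ => brieskornTau p q n p' q' (p * q * (n * (g - 1)) - (n * (g - 1)) / n)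
        ≤ brieskornTau p q n p' q' (p * q * i - i / n)) ?_ ?_ i hi
    · exact le_refl _
    · intro k hk ih; exact ih.trans (cge k hk)
  have down : ∀ i : ℤ, i ≤ n * (g - 1) → 0 ≤ i →
      brieskornTau p q n p' q' (p * q * (n * (g - 1)) - (n * (g - 1)) / n)
        ≤ brieskornTau p q n p' q' (p * q * i - i / n) := by
    refine fun i hi => Int.le_induction_down
      (motive := fun i _ => 0 ≤ i → brieskornTau p q n p' q' (p * q * (n * (g - 1)) - (n * (g - 1)) / n)
        ≤ brieskornTau p q n p' q' (p * q * i - i / n)) ?_ ?_ i hi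
    · intro _; exact le_refl _
    · intro k hk ih h0
      have hB := B1 (k - 1) h0 (by omega)
      have e : k - 1 + 1 = k := by ring
      rw [e] at hB
      exact (ih (by omega)).trans hB
  have tmin : ∀ i : ℤ, 0 ≤ i →
      brieskornTau p q n p' q' (p * q * (n * (g - 1)) - (n * (g - 1)) / n)
        ≤ brieskornTau p q n p' q' (p * q * i - i / n) := by
    intro i hi
    rcases le_or_gt i (n * (g - 1)) with h | h
    · exact down i h hi
    · exact up i h.le
  have eqA : ∀ i : ℤ, n * (g - 1) ≤ i → i ≤ n * g - 1 →
      brieskornTau p q n p' q' (p * q * i - i / n)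
        = brieskornTau p q n p' q' (p * q * (n * (g - 1)) - (n * (g - 1)) / n) := by
    refine fun i hi => Int.le_induction
      (motive := fun i _ => i ≤ n * g - 1 → brieskornTau p q n p' q' (p * q * i - i / n)
        = brieskornTau p q n p' q' (p * q * (n * (g - 1)) - (n * (g - 1)) / n)) ?_ ?_ i hi
    · intro _; rfl
    · intro k hk ih h
      rw [B2 k hk (by omega)]
      exact ih (by omega)
  refine ⟨B1, B2, fun i h1 _ => B3 i h1, ?_⟩
  intro i hi1 hi2 k hk
  rw [eqA i hi1 hi2]
  obtain ⟨ib, hib0, hbk1, hbk2⟩ := block_mem hp hq hn hk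
  rcases le_or_gt k (p * q * ib) with hcase | hcase
  · refine le_trans (tmin ib hib0) (tau_mono_up (m_nonneg hp hq hn hib0) hbk1 ?_)
    intro j hj1 hj2
    rw [dval hp hq hn hkey hib0 hj1 (lt_trans hj2 hbk2)]
    exact Fneg hp0 hq0 hp'p hq'q hkey (by linarith)
  · refine le_trans (tmin (ib + 1) (by omega)) (tau_mono_dn hk hbk2.le ?_)
    intro j hj1 hj2
    rw [dval hp hq hn hkey hib0 (le_trans hbk1 hj1) hj2]
    exact Fpos hp0 hq0 hkey (by linarith)
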